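/- Let α ≥ 0 and β ∈ R with α + β + 1 ≠ 0. Then the inequality (α−β−1)(1−α)/(α+β+1)^2 − β/(3(α+β+1)) + 1/9 ≥ 0 holds if and only if 2α − 4 ≤ β ≤ 2α − 1 (the strong coercivity condition). -/
import Mathlib

/-- For `α ≥ 0`, `β ∈ ℝ` with `α + β + 1 ≠ 0`, the constant
`(α−β−1)(1−α)/(α+β+1)² − β/(3(α+β+1)) + 1/9` is nonnegative if and only if
the strong coercivity condition `2α − 4 ≤ β ≤ 2α − 1` holds. -/
theorem scc_characterization (α β : ℝ) (hα : 0 ≤ α) (hne : α + β + 1 ≠ 0) :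
    0 ≤ (α - β - 1) * (1 - α) / (α + β + 1) ^ 2 - β / (3 * (α + β + 1)) + 1/9 ↔
      (2 * α - 4 ≤ β ∧ β ≤ 2 * α - 1) := by
  have hD : 0 < (α + β + 1) ^ 2 := by positivity
  have hEq : (α - β - 1) * (1 - α) / (α + β + 1) ^ 2 - β / (3 * (α + β + 1)) + 1/9
      = (-2 * (β - 2*α + 4) * (β - 2*α + 1)) / (9 * (α + β + 1) ^ 2) := by
    field_simp
    ring
  rw [hEq]
  constructor
  · intro h
    have hN : 0 ≤ -2 * (β - 2*α + 4) * (β - 2*α + 1) := by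
      have := (div_nonneg_iff.mp h)
      rcases this with ⟨h1, _⟩ | ⟨_, h2⟩
      · exact h1
      · nlinarith
    constructor <;> nlinarith [sq_nonneg (β - 2*α + 4), sq_nonneg (β - 2*α + 1)]
  · rintro ⟨h1, h2⟩
    apply div_nonneg _ (by positivity)
    nlinarith [mul_nonneg (by linarith : (0:ℝ) ≤ β - (2*α - 4)) (by linarith : (0:ℝ) ≤ (2*α - 1) - β)]
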